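/- Let μ be a Borel probability measure on ℝ^d with finite second moment, let a, b ∈ ℝ^d, and let S₁, …, S_J ⊆ {1, …, d} be nonempty coordinate sets with projections P_j : ℝ^d → ℝ^{|S_j|}, P_j(x) = (x_i)_{i∈S_j}. Let μ_a and μ_b be the pushforwards of μ under x ↦ x + a and x ↦ x + b. Then Σ_{j=1}^{J} W₂²(P_{j#} μ_a, P_{j#} μ_b) = Σ_{i=1}^{d} Π(i) (a_i − b_i)², where Π(i) := #{ j : i ∈ S_j } is the number of projections containing coordinate i. In particular, if every coordinate is contained in at least one S_j, this functional is a strictly positive-definite quadratic form in a − b (hence globally convex with a unique minimizer at a = b). -/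

import Mathlib

open MeasureTheory
open scoped ENNReal RealInnerProductSpace

/-- The squared quadratic Wasserstein distance `W₂²(μ, ν)`: the infimum, over all
couplings `π` of `μ` and `ν` (Borel measures on the product space whose first and second
marginals are `μ` and `ν` respectively), of the transport cost `∫ ‖x - y‖² dπ(x, y)`. -/
noncomputable def W2sq {E : Type*} [NormedAddCommGroup E] [MeasurableSpace E]
    (μ ν : Measure E) : ℝ≥0∞ :=
  ⨅ (π : Measure (E × E)) (_ : π.map Prod.fst = μ ∧ π.map Prod.snd = ν),
    ∫⁻ p, (‖p.1 - p.2‖₊ : ℝ≥0∞) ^ 2 ∂π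

section Aux
variable {E : Type*} [NormedAddCommGroup E] [NormedSpace ℝ E] [CompleteSpace E]
  [MeasurableSpace E] [BorelSpace E] [SecondCountableTopology E]

lemma aux_sq_add_le (a b : ℝ≥0∞) : (a + b) ^ 2 ≤ 4 * (a ^ 2 + b ^ 2) := by
  have hab : a * b ≤ a ^ 2 + b ^ 2 := by
    rcases le_total a b with h | h
    · calc a * b ≤ b * b := by gcongr
        _ = b ^ 2 := (sq b).symm
        _ ≤ a ^ 2 + b ^ 2 := le_add_self
    · calc a * b ≤ a * a := by gcongr
        _ = a ^ 2 := (sq a).symm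
        _ ≤ a ^ 2 + b ^ 2 := le_add_right le_rfl
  calc (a + b) ^ 2 = a ^ 2 + 2 * (a * b) + b ^ 2 := by ring
    _ ≤ a ^ 2 + 2 * (a ^ 2 + b ^ 2) + b ^ 2 := by gcongr
    _ ≤ 4 * (a ^ 2 + b ^ 2) := by
        calc a ^ 2 + 2 * (a ^ 2 + b ^ 2) + b ^ 2
            = 3 * a ^ 2 + 3 * b ^ 2 := by ring
          _ ≤ 4 * a ^ 2 + 4 * b ^ 2 := by gcongr <;> norm_num
          _ = 4 * (a ^ 2 + b ^ 2) := by ring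

lemma aux_first_moment {α : Type*} [MeasurableSpace α] {ν : Measure α} [IsProbabilityMeasure ν]
    {F : Type*} [NormedAddCommGroup F] {f : α → F} (hf : AEStronglyMeasurable f ν)
    (h : ∫⁻ x, (‖f x‖₊ : ℝ≥0∞) ^ 2 ∂ν < ⊤) : ∫⁻ x, (‖f x‖₊ : ℝ≥0∞) ∂ν < ⊤ := by
  have h1 : eLpNorm f 1 ν ≤ eLpNorm f 2 ν :=
    eLpNorm_le_eLpNorm_of_exponent_le (by norm_num) hf
  rw [eLpNorm_one_eq_lintegral_enorm] at h1
  refine h1.trans_lt ?_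
  rw [eLpNorm_eq_lintegral_rpow_enorm_toReal (by norm_num) (by norm_num)]
  simp only [enorm_eq_nnnorm]
  have : ∫⁻ x, (‖f x‖₊ : ℝ≥0∞) ^ ((2 : ℝ≥0∞).toReal) ∂ν = ∫⁻ x, (‖f x‖₊ : ℝ≥0∞) ^ 2 ∂ν := by
    norm_num
  rw [this]
  exact ENNReal.rpow_lt_top_of_nonneg (by norm_num) h.ne

lemma aux_mom_translate {ν : Measure E} [IsFiniteMeasure ν]
    (hmom : ∫⁻ x, (‖x‖₊ : ℝ≥0∞) ^ 2 ∂ν < ⊤) (u : E) :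
    ∫⁻ x, (‖x‖₊ : ℝ≥0∞) ^ 2 ∂(ν.map (· + u)) < ⊤ := by
  rw [lintegral_map (by fun_prop) (measurable_add_const u)]
  have hb : ∀ x : E, (‖x + u‖₊ : ℝ≥0∞) ^ 2 ≤ 4 * ((‖x‖₊ : ℝ≥0∞) ^ 2 + (‖u‖₊ : ℝ≥0∞) ^ 2) := by
    intro x
    refine le_trans ?_ (aux_sq_add_le _ _)
    gcongr
    exact_mod_cast nnnorm_add_le x u
  refine (lintegral_mono hb).trans_lt ?_
  rw [lintegral_const_mul _ (by fun_prop), lintegral_add_right _ measurable_const,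
    lintegral_const]
  refine ENNReal.mul_lt_top (by norm_num) (ENNReal.add_lt_top.2 ⟨hmom, ?_⟩)
  exact ENNReal.mul_lt_top (by simp [← ENNReal.coe_pow]) (measure_lt_top _ _)
end Aux
open MeasureTheory
open scoped ENNReal

section Core
variable {E : Type*} [NormedAddCommGroup E] [NormedSpace ℝ E] [CompleteSpace E]
  [MeasurableSpace E] [BorelSpace E] [SecondCountableTopology E]

lemma aux_cost_meas : Measurable (fun p : E × E => (‖p.1 - p.2‖₊ : ℝ≥0∞) ^ 2) := by
  fun_prop

lemma W2sq_translate_le (ν : Measure E) [IsProbabilityMeasure ν] (v : E) :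
    W2sq ν (ν.map (· + v)) ≤ ENNReal.ofReal (‖v‖ ^ 2) := by
  have hm : Measurable (fun x : E => (x, x + v)) :=
    measurable_id.prodMk (measurable_add_const v)
  refine iInf_le_of_le (ν.map (fun x => (x, x + v))) (iInf_le_of_le ⟨?_, ?_⟩ ?_)
  · rw [Measure.map_map measurable_fst hm]
    simp [Function.comp_def]
  · rw [Measure.map_map measurable_snd hm]
    rfl
  · rw [lintegral_map aux_cost_meas hm]
    simp only [sub_add_cancel_left, nnnorm_neg]
    rw [lintegral_const, measure_univ, mul_one, ENNReal.ofReal_pow (norm_nonneg v), ← coe_nnnorm,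
      ENNReal.ofReal_coe_nnreal]

set_option maxHeartbeats 1000000 in
lemma W2sq_translate_ge (ν : Measure E) [IsProbabilityMeasure ν]
    (hmom : ∫⁻ x, (‖x‖₊ : ℝ≥0∞) ^ 2 ∂ν < ⊤) (v : E)
    (π : Measure (E × E)) (h1 : π.map Prod.fst = ν) (h2 : π.map Prod.snd = ν.map (· + v)) :
    ENNReal.ofReal (‖v‖ ^ 2) ≤ ∫⁻ p, (‖p.1 - p.2‖₊ : ℝ≥0∞) ^ 2 ∂π := by
  have hπ : IsProbabilityMeasure π := by
    constructor
    have := congrArg (fun m : Measure E => m Set.univ) h1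
    simpa [Measure.map_apply measurable_fst MeasurableSet.univ] using this
  set A := ∫⁻ p, (‖p.1 - p.2‖₊ : ℝ≥0∞) ^ 2 ∂π with hA
  by_cases hAtop : A = ⊤
  · simp [hAtop]
  -- the displacement function
  set g : E × E → E := fun p => p.1 - p.2 with hg
  have hgc : Continuous g := continuous_fst.sub continuous_snd
  have hgm : AEStronglyMeasurable g π := hgc.aestronglyMeasurable
  have hg2 : ∫⁻ p, (‖g p‖₊ : ℝ≥0∞) ^ 2 ∂π < ⊤ := lt_top_iff_ne_top.2 hAtop
  have hg1 : ∫⁻ p, (‖g p‖₊ : ℝ≥0∞) ∂π < ⊤ := aux_first_moment hgm hg2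
  have hgint : Integrable g π := ⟨hgm, hg1⟩
  -- integrability of the first coordinate
  have hν1 : ∫⁻ x, (‖x‖₊ : ℝ≥0∞) ∂ν < ⊤ :=
    aux_first_moment aestronglyMeasurable_id hmom
  have hfst : Integrable (fun p : E × E => p.1) π := by
    refine ⟨continuous_fst.aestronglyMeasurable, ?_⟩
    have : ∫⁻ p, (‖(p : E × E).1‖₊ : ℝ≥0∞) ∂π = ∫⁻ x, (‖x‖₊ : ℝ≥0∞) ∂ν := by
      rw [← h1, lintegral_map (by fun_prop) measurable_fst]
    rw [HasFiniteIntegral]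
    exact this.trans_lt hν1
  have hsnd : Integrable (fun p : E × E => p.2) π := by
    have : (fun p : E × E => p.2) = fun p : E × E => p.1 - g p := by
      funext p; simp [hg]
    rw [this]
    exact hfst.sub hgint
  -- the mean of g is -v
  have hid : Integrable (fun x : E => x) ν := ⟨aestronglyMeasurable_id, hν1⟩
  have hmean1 : ∫ p, (p : E × E).1 ∂π = ∫ x, x ∂ν := by
    rw [← h1]
    exact (integral_map measurable_fst.aemeasurable aestronglyMeasurable_id).symm
  have hmean2 : ∫ p, (p : E × E).2 ∂π = ∫ x, x ∂ν + v := by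
    have e1 : ∫ p, (p : E × E).2 ∂π = ∫ x, x ∂(ν.map (· + v)) := by
      rw [← h2]
      exact (integral_map measurable_snd.aemeasurable aestronglyMeasurable_id).symm
    have e2 : ∫ x, x ∂(ν.map (· + v)) = ∫ x, (x + v) ∂ν :=
      integral_map (measurable_add_const v).aemeasurable aestronglyMeasurable_id
    rw [e1, e2, integral_add hid (integrable_const v), integral_const]
    simp
  have hmg : ∫ p, g p ∂π = -v := by
    rw [hg]
    simp only
    rw [integral_sub hfst hsnd, hmean1, hmean2]
    abel
  -- Jensen / Cauchy-Schwarz chain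
  have step1 : ENNReal.ofReal ‖v‖ ≤ ∫⁻ p, (‖g p‖₊ : ℝ≥0∞) ∂π := by
    refine le_trans ?_ (ofReal_integral_norm_eq_lintegral_enorm hgint).le
    refine ENNReal.ofReal_le_ofReal ?_
    calc ‖v‖ = ‖∫ p, g p ∂π‖ := by rw [hmg, norm_neg]
      _ ≤ ∫ p, ‖g p‖ ∂π := norm_integral_le_integral_norm g
  have step2 : (∫⁻ p, (‖g p‖₊ : ℝ≥0∞) ∂π) ^ 2 ≤ A := by
    have h12 : eLpNorm g 1 π ≤ eLpNorm g 2 π :=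
      eLpNorm_le_eLpNorm_of_exponent_le (by norm_num) hgm
    rw [eLpNorm_one_eq_lintegral_enorm] at h12
    have h2eq : eLpNorm g 2 π ^ 2 = A := by
      rw [eLpNorm_eq_lintegral_rpow_enorm_toReal (by norm_num) (by norm_num)]
      simp only [enorm_eq_nnnorm]
      rw [← ENNReal.rpow_natCast _ 2, ← ENNReal.rpow_mul]
      norm_num
      rfl
    calc (∫⁻ p, (‖g p‖₊ : ℝ≥0∞) ∂π) ^ 2 ≤ eLpNorm g 2 π ^ 2 := by gcongr; exact h12
      _ = A := h2eq
  calc ENNReal.ofReal (‖v‖ ^ 2) = (ENNReal.ofReal ‖v‖) ^ 2 := by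
        rw [← ENNReal.ofReal_pow (norm_nonneg v)]
    _ ≤ (∫⁻ p, (‖g p‖₊ : ℝ≥0∞) ∂π) ^ 2 := by gcongr
    _ ≤ A := step2

lemma W2sq_translate (ν : Measure E) [IsProbabilityMeasure ν]
    (hmom : ∫⁻ x, (‖x‖₊ : ℝ≥0∞) ^ 2 ∂ν < ⊤) (v : E) :
    W2sq ν (ν.map (· + v)) = ENNReal.ofReal (‖v‖ ^ 2) := by
  refine le_antisymm (W2sq_translate_le ν v) ?_
  refine le_iInf fun π => le_iInf fun h => ?_
  exact W2sq_translate_ge ν hmom v π h.1 h.2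

lemma W2sq_translate₂ (ν : Measure E) [IsProbabilityMeasure ν]
    (hmom : ∫⁻ x, (‖x‖₊ : ℝ≥0∞) ^ 2 ∂ν < ⊤) (u w : E) :
    W2sq (ν.map (· + u)) (ν.map (· + w)) = ENNReal.ofReal (‖w - u‖ ^ 2) := by
  have key : ν.map (· + w) = (ν.map (· + u)).map (· + (w - u)) := by
    rw [Measure.map_map (measurable_add_const _) (measurable_add_const _)]
    congr 1
    funext x
    simp [Function.comp_def]
  haveI : IsProbabilityMeasure (ν.map (· + u)) :=
    Measure.isProbabilityMeasure_map (measurable_add_const u).aemeasurable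
  rw [key, W2sq_translate _ (aux_mom_translate hmom u)]
end Core

/-- **Locating an object from projections is convex under `W₂`.**  For projections
`P_j` onto nonempty coordinate sets `S_j`,
`Σ_j W₂²(P_{j#} μ_a, P_{j#} μ_b) = Σ_i Π(i) (a_i - b_i)²` where `Π(i)` is the number of
`j` with `i ∈ S_j`; in particular, if every coordinate is covered by some `S_j`, this
quantity is a strictly positive-definite quadratic form in `a - b`: it vanishes iff
`a = b`. -/
theorem W2sq_sum_projected_translates
    {d J : ℕ} (hd : 1 ≤ d) (μ : Measure (EuclideanSpace ℝ (Fin d)))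
    [IsProbabilityMeasure μ]
    (hmom : ∫⁻ x, (‖x‖₊ : ℝ≥0∞) ^ 2 ∂μ < ⊤)
    (a b : EuclideanSpace ℝ (Fin d))
    (S : Fin J → Finset (Fin d)) (hS : ∀ j, (S j).Nonempty)
    (P : ∀ j, EuclideanSpace ℝ (Fin d) → EuclideanSpace ℝ {i // i ∈ S j})
    (hP : ∀ j x i, P j x i = x i.1) :
    (∑ j, W2sq ((μ.map (· + a)).map (P j)) ((μ.map (· + b)).map (P j)) =
        ENNReal.ofReal (∑ i, ((Finset.univ.filter fun j => i ∈ S j).card : ℝ) * (a i - b i) ^ 2)) ∧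
      ((∀ i, ∃ j, i ∈ S j) →
        ((∑ j, W2sq ((μ.map (· + a)).map (P j)) ((μ.map (· + b)).map (P j)) = 0) ↔ a = b)) := by
  -- basic facts about the projections
  have hPm : ∀ j, Measurable (P j) := by
    intro j
    have : P j = fun x => (WithLp.toLp 2 (fun i : {i // i ∈ S j} => x i.1) :
        EuclideanSpace ℝ {i // i ∈ S j}) :=
      funext fun x => PiLp.ext fun i => hP j x i
    rw [this]
    exact (WithLp.measurable_toLp 2 _).comp (measurable_pi_lambda _ fun i =>
      (measurable_pi_apply i.1).comp (WithLp.measurable_ofLp 2 _))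
  have hPadd : ∀ j (x c : EuclideanSpace ℝ (Fin d)), P j (x + c) = P j x + P j c := by
    intro j x c
    ext i
    have h1 : (P j x + P j c) i = P j x i + P j c i := by simp
    rw [h1, hP, hP, hP]
    simp
  -- each summand equals the squared norm of the projected displacement
  have hterm : ∀ j, W2sq ((μ.map (· + a)).map (P j)) ((μ.map (· + b)).map (P j)) =
      ENNReal.ofReal (‖P j b - P j a‖ ^ 2) := by
    intro j
    set ν := μ.map (P j) with hν
    haveI : IsProbabilityMeasure ν := Measure.isProbabilityMeasure_map (hPm j).aemeasurable
    have hswap : ∀ c : EuclideanSpace ℝ (Fin d),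
        (μ.map (· + c)).map (P j) = ν.map (· + P j c) := by
      intro c
      rw [hν, Measure.map_map (hPm j) (measurable_add_const c),
        Measure.map_map (measurable_add_const (P j c)) (hPm j)]
      congr 1
      funext x
      exact hPadd j x c
    have hmomν : ∫⁻ y, (‖y‖₊ : ℝ≥0∞) ^ 2 ∂ν < ⊤ := by
      rw [hν, lintegral_map (by fun_prop) (hPm j)]
      refine (lintegral_mono fun x => ?_).trans_lt hmom
      have hle : ‖P j x‖ ≤ ‖x‖ := by
        rw [EuclideanSpace.norm_eq, EuclideanSpace.norm_eq]
        refine Real.sqrt_le_sqrt ?_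
        have e1 : ∑ i : {i // i ∈ S j}, ‖P j x i‖ ^ 2 = ∑ i ∈ S j, ‖x i‖ ^ 2 := by
          rw [← Finset.sum_coe_sort (S j) (fun i => ‖x i‖ ^ 2)]
          exact Finset.sum_congr rfl fun i _ => by rw [hP]
        rw [e1]
        exact Finset.sum_le_sum_of_subset_of_nonneg (Finset.subset_univ _)
          (fun i _ _ => by positivity)
      have h2 : (‖P j x‖₊ : ℝ≥0∞) ≤ (‖x‖₊ : ℝ≥0∞) := by exact_mod_cast hle
      exact pow_le_pow_left' h2 2
    rw [hswap a, hswap b, W2sq_translate₂ ν hmomν (P j a) (P j b)]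
  -- squared norm of the projected displacement as a sum over coordinates
  have hnorm : ∀ j, ‖P j b - P j a‖ ^ 2 = ∑ i ∈ S j, (a i - b i) ^ 2 := by
    intro j
    rw [EuclideanSpace.norm_eq, Real.sq_sqrt (by positivity)]
    rw [← Finset.sum_coe_sort (S j) (fun i => (a i - b i) ^ 2)]
    refine Finset.sum_congr rfl fun i _ => ?_
    have h1 : (P j b - P j a) i = P j b i - P j a i := by simp
    rw [h1, hP, hP, Real.norm_eq_abs, sq_abs]
    ring
  -- the combinatorial resummation
  have hresum : ∑ j, ∑ i ∈ S j, (a i - b i) ^ 2 =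
      ∑ i, ((Finset.univ.filter fun j => i ∈ S j).card : ℝ) * (a i - b i) ^ 2 := by
    calc ∑ j, ∑ i ∈ S j, (a i - b i) ^ 2
        = ∑ j, ∑ i, if i ∈ S j then (a i - b i) ^ 2 else 0 := by
          refine Finset.sum_congr rfl fun j _ => ?_
          rw [Finset.sum_ite_mem, Finset.univ_inter]
      _ = ∑ i, ∑ j, if i ∈ S j then (a i - b i) ^ 2 else 0 := Finset.sum_comm
      _ = ∑ i, ((Finset.univ.filter fun j => i ∈ S j).card : ℝ) * (a i - b i) ^ 2 := by
          refine Finset.sum_congr rfl fun i _ => ?_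
          rw [← Finset.sum_filter, Finset.sum_const, nsmul_eq_mul]
  have hmain : ∑ j, W2sq ((μ.map (· + a)).map (P j)) ((μ.map (· + b)).map (P j)) =
      ENNReal.ofReal (∑ i, ((Finset.univ.filter fun j => i ∈ S j).card : ℝ) * (a i - b i) ^ 2) := by
    calc ∑ j, W2sq ((μ.map (· + a)).map (P j)) ((μ.map (· + b)).map (P j))
        = ∑ j, ENNReal.ofReal (∑ i ∈ S j, (a i - b i) ^ 2) := by
          refine Finset.sum_congr rfl fun j _ => ?_
          rw [hterm j, hnorm j]
      _ = ENNReal.ofReal (∑ j, ∑ i ∈ S j, (a i - b i) ^ 2) := by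
          rw [ENNReal.ofReal_sum_of_nonneg fun j _ => by positivity]
      _ = _ := by rw [hresum]
  refine ⟨hmain, fun hcov => ?_⟩
  rw [hmain]
  constructor
  · intro h
    have hT : ∑ i, ((Finset.univ.filter fun j => i ∈ S j).card : ℝ) * (a i - b i) ^ 2 = 0 := by
      have h0 := ENNReal.ofReal_eq_zero.1 h
      refine le_antisymm h0 (Finset.sum_nonneg fun i _ => by positivity)
    have hzero := (Finset.sum_eq_zero_iff_of_nonneg
      (fun i _ => by positivity : ∀ i ∈ Finset.univ,
        0 ≤ ((Finset.univ.filter fun j => i ∈ S j).card : ℝ) * (a i - b i) ^ 2)).1 hT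
    ext i
    have hi := hzero i (Finset.mem_univ i)
    obtain ⟨j, hj⟩ := hcov i
    have hcard : (0 : ℝ) < ((Finset.univ.filter fun j => i ∈ S j).card : ℝ) := by
      have : j ∈ Finset.univ.filter fun j => i ∈ S j :=
        Finset.mem_filter.2 ⟨Finset.mem_univ j, hj⟩
      exact_mod_cast Finset.card_pos.2 ⟨j, this⟩
    have hsq : (a i - b i) ^ 2 = 0 := by
      rcases mul_eq_zero.1 hi with h' | h'
      · exact absurd h' hcard.ne'
      · exact h'
    have := pow_eq_zero_iff (n := 2) (by norm_num) |>.1 hsq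
    linarith [sub_eq_zero.1 this]
  · rintro rfl
    simp
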